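/- Suppose each f_i is convex with L_i-Lipschitz gradient, L = max_i L_i, and 0 < c < 1/(2L·λ_max(𝕃)), where λ_max(𝕃) is the largest eigenvalue of 𝕃. Then any Mirror-EXTRA trajectory (x^k, q^k) satisfies, for all k ≥ 0, c‖q^{k+1} − q^{k+2}‖_F² + (2/(L·λ_max(𝕃)) − 3c)‖∇f(x^{k+1}) − ∇f(x^{k+2})‖_𝕃² ≤ c‖q^k − q^{k+1}‖_F² + (2/(L·λ_max(𝕃)) − 3c)‖∇f(x^k) − ∇f(x^{k+1})‖_𝕃². -/

import Mathlib

open Matrix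

noncomputable section

/-- Squared Frobenius norm. -/
def frobSq {m p : ℕ} (A : Matrix (Fin m) (Fin p) ℝ) : ℝ := ∑ i, ∑ j, (A i j) ^ 2

/-- Squared `P`-weighted seminorm `⟨A, P A⟩ = tr(Aᵀ P A)`. -/
def wSq {m p : ℕ} (P : Matrix (Fin m) (Fin m) ℝ) (A : Matrix (Fin m) (Fin p) ℝ) : ℝ :=
  Matrix.trace (Aᵀ * P * A)

/-- Squared Euclidean norm of a vector. -/
def enormSq {p : ℕ} (u : Fin p → ℝ) : ℝ := ∑ j, (u j) ^ 2

/-- The matrix whose `i`-th row is `∇fᵢ(xᵢ)`, given the gradient maps `g i`. -/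
def gradMat {n p : ℕ} (g : Fin n → (Fin p → ℝ) → (Fin p → ℝ))
    (x : Matrix (Fin n) (Fin p) ℝ) : Matrix (Fin n) (Fin p) ℝ :=
  Matrix.of fun i => g i (x i)

section Aux

open Filter Set Topology

local notation "⟪" x ", " y "⟫" => @inner ℝ _ _ x y

lemma rayleigh_bound {m : ℕ} (M : Matrix (Fin m) (Fin m) ℝ) (hM : M.IsHermitian) (lmax : ℝ)
    (hmax : ∀ (ν : ℝ) (v : Fin m → ℝ), v ≠ 0 → M.mulVec v = ν • v → ν ≤ lmax) :
    ∀ v : Fin m → ℝ, v ⬝ᵥ M.mulVec v ≤ lmax * (v ⬝ᵥ v) := by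
  intro v
  classical
  set b := hM.eigenvectorBasis with hb
  set v' : EuclideanSpace ℝ (Fin m) := (WithLp.equiv 2 (Fin m → ℝ)).symm v with hv'
  have heig : ∀ i, hM.eigenvalues i ≤ lmax := by
    intro i
    refine hmax _ (⇑(b i)) ?_ ?_
    · intro h
      have h1 : ‖b i‖ = 1 := b.orthonormal.1 i
      have : (b i : EuclideanSpace ℝ (Fin m)) = 0 := (WithLp.ofLp_eq_zero _).1 h
      rw [this, norm_zero] at h1
      norm_num at h1
    · exact hM.mulVec_eigenvectorBasis i
  have hinner : ∀ (u w : Fin m → ℝ),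
      ⟪((WithLp.equiv 2 (Fin m → ℝ)).symm u : EuclideanSpace ℝ (Fin m)),
        (WithLp.equiv 2 (Fin m → ℝ)).symm w⟫ = u ⬝ᵥ w := by
    intro u w
    simp [PiLp.inner_apply, RCLike.inner_apply, dotProduct, mul_comm]
  have hbv : ∀ i, (WithLp.equiv 2 (Fin m → ℝ)).symm ⇑(b i) = b i := fun i => rfl
  have key : ∀ i, ⟪b i, ((WithLp.equiv 2 (Fin m → ℝ)).symm (M.mulVec v) : EuclideanSpace ℝ (Fin m))⟫
      = hM.eigenvalues i * ⟪b i, v'⟫ := by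
    intro i
    rw [← hbv i, hinner, hv', hinner, dotProduct_mulVec]
    have hsym : (⇑(b i) ᵥ* M) = M *ᵥ ⇑(b i) := by
      conv_lhs => rw [← hM.eq, conjTranspose_eq_transpose_of_trivial, vecMul_transpose]
    rw [hsym, hM.mulVec_eigenvectorBasis i, smul_dotProduct]
    rfl
  have hsum1 : ⟪v', ((WithLp.equiv 2 (Fin m → ℝ)).symm (M.mulVec v) : EuclideanSpace ℝ (Fin m))⟫
      = v ⬝ᵥ M.mulVec v := by rw [hv', hinner]
  have hsum2 : ⟪v', v'⟫ = v ⬝ᵥ v := by rw [hv', hinner]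
  set w' : EuclideanSpace ℝ (Fin m) := (WithLp.equiv 2 (Fin m → ℝ)).symm (M.mulVec v) with hw'
  calc v ⬝ᵥ M.mulVec v = ⟪v', w'⟫ := hsum1.symm
    _ = ∑ i, ⟪v', b i⟫ * ⟪b i, w'⟫ := (b.sum_inner_mul_inner v' w').symm
    _ = ∑ i, hM.eigenvalues i * (⟪b i, v'⟫ * ⟪b i, v'⟫) := by
        refine Finset.sum_congr rfl fun i _ => ?_
        rw [key i, real_inner_comm v' (b i)]; ring
    _ ≤ ∑ i, lmax * (⟪b i, v'⟫ * ⟪b i, v'⟫) := by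
        refine Finset.sum_le_sum fun i _ => ?_
        exact mul_le_mul_of_nonneg_right (heig i) (mul_self_nonneg _)
    _ = lmax * ∑ i, ⟪v', b i⟫ * ⟪b i, v'⟫ := by
        rw [Finset.mul_sum]
        refine Finset.sum_congr rfl fun i _ => ?_
        rw [real_inner_comm v' (b i)]
    _ = lmax * ⟪v', v'⟫ := by rw [b.sum_inner_mul_inner v' v']
    _ = lmax * (v ⬝ᵥ v) := by rw [hsum2]

variable {E : Type*} [NormedAddCommGroup E] [InnerProductSpace ℝ E] [CompleteSpace E]

lemma comp_line_hasDerivAt (F : E → ℝ) (G : E → E) (hgrad : ∀ w, HasGradientAt F (G w) w)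
    (x y : E) (t : ℝ) :
    HasDerivAt (fun s : ℝ => F (x + s • (y - x))) ⟪G (x + t • (y - x)), y - x⟫ t := by
  have hc : HasDerivAt (fun s : ℝ => x + s • (y - x)) (y - x) t := by
    simpa using ((hasDerivAt_id t).smul_const (y - x)).const_add x
  have hf := (hgrad (x + t • (y - x))).hasFDerivAt
  have h2 := hf.comp_hasDerivAt t hc
  simpa [InnerProductSpace.toDual_apply_apply, Function.comp_def] using h2

lemma convex_grad_ineq (F : E → ℝ) (G : E → E) (hgrad : ∀ w, HasGradientAt F (G w) w)
    (hconv : ConvexOn ℝ Set.univ F) (x y : E) :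
    F x + ⟪G x, y - x⟫ ≤ F y := by
  have hd := comp_line_hasDerivAt F G hgrad x y 0
  rw [zero_smul, add_zero] at hd
  have hslope : Tendsto (slope (fun s : ℝ => F (x + s • (y - x))) 0) (𝓝[>] 0)
      (𝓝 ⟪G x, y - x⟫) :=
    (hasDerivAt_iff_tendsto_slope.1 hd).mono_left
      (nhdsWithin_mono 0 (fun s hs => ne_of_gt hs))
  have hev : ∀ᶠ t in 𝓝[>] (0:ℝ),
      slope (fun s : ℝ => F (x + s • (y - x))) 0 t ≤ F y - F x := by
    filter_upwards [Ioc_mem_nhdsGT_of_mem (by norm_num : (0:ℝ) ∈ Set.Ico 0 1)] with t ht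
    have h0 : 0 < t := ht.1
    have h1 : t ≤ 1 := ht.2
    have hcvx := hconv.2 (Set.mem_univ x) (Set.mem_univ y)
      (by linarith : (0:ℝ) ≤ 1 - t) h0.le (by ring)
    have hpt : (1 - t) • x + t • y = x + t • (y - x) := by module
    rw [hpt] at hcvx
    rw [slope_def_field]
    rw [div_le_iff₀ (by simpa using h0)]
    have h00 : F (x + (0:ℝ) • (y - x)) = F x := by rw [zero_smul, add_zero]
    rw [h00]
    simp only [smul_eq_mul] at hcvx
    nlinarith
  have hfin := le_of_tendsto hslope hev
  linarith

lemma descent_lemma (F : E → ℝ) (G : E → E) (hgrad : ∀ w, HasGradientAt F (G w) w)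
    {L : ℝ} (hL : 0 < L) (hlip : ∀ u v, ‖G u - G v‖ ≤ L * ‖u - v‖) (x y : E) :
    F y ≤ F x + ⟪G x, y - x⟫ + L / 2 * ‖y - x‖ ^ 2 := by
  set h : ℝ → ℝ :=
    fun t => F (x + t • (y - x)) - t * ⟪G x, y - x⟫ - L * t ^ 2 / 2 * ‖y - x‖ ^ 2 with hh
  have hderiv : ∀ t, HasDerivAt h
      (⟪G (x + t • (y - x)), y - x⟫ - ⟪G x, y - x⟫ - L * t * ‖y - x‖ ^ 2) t := by
    intro t
    have h1 := comp_line_hasDerivAt F G hgrad x y t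
    have h2 : HasDerivAt (fun t : ℝ => t * ⟪G x, y - x⟫) ⟪G x, y - x⟫ t := by
      simpa using (hasDerivAt_id t).mul_const (⟪G x, y - x⟫ : ℝ)
    have h3 : HasDerivAt (fun t : ℝ => L * t ^ 2 / 2 * ‖y - x‖ ^ 2)
        (L * t * ‖y - x‖ ^ 2) t := by
      have h4 := (((hasDerivAt_pow 2 t).const_mul L).div_const 2).mul_const
        ((‖y - x‖ : ℝ) ^ 2)
      refine h4.congr_deriv ?_
      ring
    exact (h1.sub h2).sub h3
  have hdiff : Differentiable ℝ h := fun t => (hderiv t).differentiableAt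
  have hmono : AntitoneOn h (Set.Icc 0 1) := by
    apply antitoneOn_of_deriv_nonpos (convex_Icc 0 1) hdiff.continuous.continuousOn
      hdiff.differentiableOn
    intro t ht
    rw [interior_Icc] at ht
    rw [(hderiv t).deriv]
    have hlip' : ‖G (x + t • (y - x)) - G x‖ ≤ L * (t * ‖y - x‖) := by
      have h5 := hlip (x + t • (y - x)) x
      rw [add_sub_cancel_left, norm_smul, Real.norm_eq_abs, abs_of_pos ht.1] at h5
      linarith
    have hcs : ⟪G (x + t • (y - x)) - G x, y - x⟫
        ≤ ‖G (x + t • (y - x)) - G x‖ * ‖y - x‖ := real_inner_le_norm _ _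
    have hsub : ⟪G (x + t • (y - x)), y - x⟫ - ⟪G x, y - x⟫
        = ⟪G (x + t • (y - x)) - G x, y - x⟫ := (inner_sub_left _ _ _).symm
    rw [sub_sub, ← sub_sub, hsub]
    nlinarith [norm_nonneg (y - x), norm_nonneg (G (x + t • (y - x)) - G x)]
  have h10 : h 1 ≤ h 0 := hmono (Set.left_mem_Icc.2 zero_le_one)
    (Set.right_mem_Icc.2 zero_le_one) zero_le_one
  have e1 : h 1 = F y - ⟪G x, y - x⟫ - L / 2 * ‖y - x‖ ^ 2 := by
    simp [hh]
  have e0 : h 0 = F x := by simp [hh]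
  rw [e1, e0] at h10
  linarith

lemma upper_bound (F : E → ℝ) (G : E → E) (hgrad : ∀ w, HasGradientAt F (G w) w)
    (hconv : ConvexOn ℝ Set.univ F)
    {L : ℝ} (hL : 0 < L) (hlip : ∀ u v, ‖G u - G v‖ ≤ L * ‖u - v‖) (u v : E) :
    F v - ⟪G v, v⟫ ≤ F u - ⟪G v, u⟫ - 1 / (2 * L) * ‖G u - G v‖ ^ 2 := by
  set φ : E → ℝ := fun w => F w - ⟪G v, w⟫ with hφ
  set Gφ : E → E := fun w => G w - G v with hGφ
  have hgradφ : ∀ w, HasGradientAt φ (Gφ w) w := by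
    intro w
    rw [hasGradientAt_iff_hasFDerivAt]
    have h1 : HasFDerivAt F (InnerProductSpace.toDual ℝ E (G w)) w :=
      (hgrad w).hasFDerivAt
    have h2 : HasFDerivAt (fun w : E => (⟪G v, w⟫ : ℝ))
        (InnerProductSpace.toDual ℝ E (G v)) w :=
      (InnerProductSpace.toDual ℝ E (G v)).hasFDerivAt
    have h3 := h1.sub h2
    have h4 : InnerProductSpace.toDual ℝ E (Gφ w)
        = InnerProductSpace.toDual ℝ E (G w) - InnerProductSpace.toDual ℝ E (G v) :=
      map_sub _ _ _
    rw [h4]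
    exact h3
  have hconvφ : ConvexOn ℝ Set.univ φ := by
    refine ⟨convex_univ, ?_⟩
    intro z hz w hw a b ha hb hab
    have h5 := hconv.2 hz hw ha hb hab
    simp only [hφ, inner_add_right, inner_smul_right, smul_eq_mul] at h5 ⊢
    linarith
  have hlipφ : ∀ a b, ‖Gφ a - Gφ b‖ ≤ L * ‖a - b‖ := by
    intro a b
    have : Gφ a - Gφ b = G a - G b := by rw [hGφ]; exact sub_sub_sub_cancel_right _ _ _
    rw [this]; exact hlip a b
  have hmin : φ v ≤ φ (u - (1 / L) • Gφ u) := by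
    have h6 := convex_grad_ineq φ Gφ hgradφ hconvφ v (u - (1 / L) • Gφ u)
    have h0 : Gφ v = 0 := sub_self _
    rw [h0, inner_zero_left, add_zero] at h6
    exact h6
  have hdes := descent_lemma φ Gφ hgradφ hL hlipφ u (u - (1 / L) • Gφ u)
  have hy : u - (1 / L) • Gφ u - u = -((1 / L) • Gφ u) := by abel
  rw [hy] at hdes
  have hi1 : ⟪Gφ u, -((1 / L) • Gφ u)⟫ = -(1 / L * ‖Gφ u‖ ^ 2) := by
    rw [inner_neg_right, real_inner_smul_right, real_inner_self_eq_norm_sq]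
  have hi2 : ‖-((1 / L) • Gφ u)‖ ^ 2 = (1 / L) ^ 2 * ‖Gφ u‖ ^ 2 := by
    rw [norm_neg, norm_smul, Real.norm_eq_abs, mul_pow, sq_abs]
  rw [hi1, hi2] at hdes
  have hLne : L ≠ 0 := ne_of_gt hL
  have key : φ v ≤ φ u - 1 / (2 * L) * ‖Gφ u‖ ^ 2 := by
    have : L / 2 * ((1 / L) ^ 2 * ‖Gφ u‖ ^ 2) - 1 / L * ‖Gφ u‖ ^ 2
        = -(1 / (2 * L) * ‖Gφ u‖ ^ 2) := by field_simp; ring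
    nlinarith [hmin, hdes]
  simpa only [hφ, hGφ] using key

lemma cocoercivity (F : E → ℝ) (G : E → E) (hgrad : ∀ w, HasGradientAt F (G w) w)
    (hconv : ConvexOn ℝ Set.univ F)
    {L : ℝ} (hL : 0 < L) (hlip : ∀ u v, ‖G u - G v‖ ≤ L * ‖u - v‖) (u v : E) :
    1 / L * ‖G u - G v‖ ^ 2 ≤ ⟪G u - G v, u - v⟫ := by
  have h1 := upper_bound F G hgrad hconv hL hlip u v
  have h2 := upper_bound F G hgrad hconv hL hlip v u
  rw [norm_sub_rev (G v) (G u)] at h2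
  have hinner : ⟪G u - G v, u - v⟫
      = (⟪G u, u⟫ - ⟪G u, v⟫) - (⟪G v, u⟫ - ⟪G v, v⟫) := by
    rw [inner_sub_left, inner_sub_right, inner_sub_right]
  have he : 1 / L = 1 / (2 * L) + 1 / (2 * L) := by field_simp; ring
  rw [hinner, he]
  linarith

lemma norm_symm_sq {p : ℕ} (w : Fin p → ℝ) :
    ‖((WithLp.equiv 2 (Fin p → ℝ)).symm w : EuclideanSpace ℝ (Fin p))‖ ^ 2 = enormSq w := by
  rw [EuclideanSpace.norm_eq, Real.sq_sqrt (by positivity)]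
  simp [enormSq, Real.norm_eq_abs, sq_abs]

lemma row_coco {p : ℕ} (f : (Fin p → ℝ) → ℝ) (g : (Fin p → ℝ) → (Fin p → ℝ))
    (hgrad : ∀ u : Fin p → ℝ,
      HasGradientAt (fun v : EuclideanSpace ℝ (Fin p) => f ((WithLp.equiv 2 (Fin p → ℝ)) v))
        ((WithLp.equiv 2 (Fin p → ℝ)).symm (g u))
        ((WithLp.equiv 2 (Fin p → ℝ)).symm u))
    (hconv : ConvexOn ℝ Set.univ f)
    {L : ℝ} (hL : 0 < L)
    (hlip : ∀ u v, enormSq (g u - g v) ≤ L ^ 2 * enormSq (u - v)) (u v : Fin p → ℝ) :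
    1 / L * enormSq (g u - g v) ≤ ∑ j, (g u j - g v j) * (u j - v j) := by
  set e := WithLp.equiv 2 (Fin p → ℝ) with he
  set F : EuclideanSpace ℝ (Fin p) → ℝ := fun w => f (e w) with hF
  set G : EuclideanSpace ℝ (Fin p) → EuclideanSpace ℝ (Fin p) :=
    fun w => e.symm (g (e w)) with hG
  have hgrad' : ∀ w, HasGradientAt F (G w) w := by
    intro w
    have h := hgrad (e w)
    rw [Equiv.symm_apply_apply] at h
    exact h
  have hconv' : ConvexOn ℝ Set.univ F := by
    refine ⟨convex_univ, ?_⟩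
    intro z _ w _ a b ha hb hab
    have h := hconv.2 (Set.mem_univ (e z)) (Set.mem_univ (e w)) ha hb hab
    simpa [hF, he, WithLp.equiv_apply, WithLp.ofLp_add, WithLp.ofLp_smul] using h
  have hsubG : ∀ a b : EuclideanSpace ℝ (Fin p), G a - G b = e.symm (g (e a) - g (e b)) := by
    intro a b
    rfl
  have hnorm2 : ∀ a b : EuclideanSpace ℝ (Fin p), ‖a - b‖ ^ 2 = enormSq (e a - e b) := by
    intro a b
    have : a - b = e.symm (e a - e b) := rfl
    rw [this, norm_symm_sq]
  have hlip' : ∀ a b : EuclideanSpace ℝ (Fin p), ‖G a - G b‖ ≤ L * ‖a - b‖ := by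
    intro a b
    have h1 : ‖G a - G b‖ ^ 2 ≤ (L * ‖a - b‖) ^ 2 := by
      rw [hsubG, norm_symm_sq, mul_pow]
      calc enormSq (g (e a) - g (e b)) ≤ L ^ 2 * enormSq (e a - e b) := hlip _ _
        _ = L ^ 2 * ‖a - b‖ ^ 2 := by rw [hnorm2]
    calc ‖G a - G b‖ = Real.sqrt (‖G a - G b‖ ^ 2) := (Real.sqrt_sq (norm_nonneg _)).symm
      _ ≤ Real.sqrt ((L * ‖a - b‖) ^ 2) := Real.sqrt_le_sqrt h1
      _ = L * ‖a - b‖ := Real.sqrt_sq (by positivity)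
  have hco := cocoercivity F G hgrad' hconv' hL hlip' (e.symm u) (e.symm v)
  have hGu : G (e.symm u) = e.symm (g u) := rfl
  have hGv : G (e.symm v) = e.symm (g v) := rfl
  have hGd : G (e.symm u) - G (e.symm v) = e.symm (g u - g v) := by
    rw [hGu, hGv]; rfl
  have hud : (e.symm u : EuclideanSpace ℝ (Fin p)) - e.symm v = e.symm (u - v) := by
    rfl
  rw [hGd, hud, norm_symm_sq] at hco
  have hip : ⟪(e.symm (g u - g v) : EuclideanSpace ℝ (Fin p)), e.symm (u - v)⟫
      = ∑ j, (g u j - g v j) * (u j - v j) := by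
    rw [PiLp.inner_apply]
    have hc : ∀ (w : Fin p → ℝ) (j : Fin p),
        ((e.symm w : EuclideanSpace ℝ (Fin p)) j : ℝ) = w j := fun _ _ => rfl
    refine Finset.sum_congr rfl fun j _ => ?_
    simp [RCLike.inner_apply, hc, Pi.sub_apply, mul_comm]
  rw [hip] at hco
  exact hco

end Aux

section Fip

def fip {m p : ℕ} (A B : Matrix (Fin m) (Fin p) ℝ) : ℝ := ∑ i, ∑ j, A i j * B i j

lemma fip_comm {m p : ℕ} (A B : Matrix (Fin m) (Fin p) ℝ) : fip A B = fip B A := by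
  simp [fip, mul_comm]

lemma fip_self_nonneg {m p : ℕ} (A : Matrix (Fin m) (Fin p) ℝ) : 0 ≤ fip A A := by
  refine Finset.sum_nonneg fun i _ => Finset.sum_nonneg fun j _ => mul_self_nonneg _

lemma frobSq_eq {m p : ℕ} (A : Matrix (Fin m) (Fin p) ℝ) : frobSq A = fip A A := by
  simp [frobSq, fip, sq]

lemma fip_add_left {m p : ℕ} (A B C : Matrix (Fin m) (Fin p) ℝ) :
    fip (A + B) C = fip A C + fip B C := by
  simp [fip, Matrix.add_apply, add_mul, Finset.sum_add_distrib]

lemma fip_sub_left {m p : ℕ} (A B C : Matrix (Fin m) (Fin p) ℝ) :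
    fip (A - B) C = fip A C - fip B C := by
  simp [fip, Matrix.sub_apply, sub_mul, Finset.sum_sub_distrib]

lemma fip_add_right {m p : ℕ} (A B C : Matrix (Fin m) (Fin p) ℝ) :
    fip A (B + C) = fip A B + fip A C := by
  simp [fip, Matrix.add_apply, mul_add, Finset.sum_add_distrib]

lemma fip_sub_right {m p : ℕ} (A B C : Matrix (Fin m) (Fin p) ℝ) :
    fip A (B - C) = fip A B - fip A C := by
  simp [fip, Matrix.sub_apply, mul_sub, Finset.sum_sub_distrib]

lemma fip_smul_right {m p : ℕ} (c : ℝ) (A B : Matrix (Fin m) (Fin p) ℝ) :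
    fip A (c • B) = c * fip A B := by
  simp [fip, Matrix.smul_apply, smul_eq_mul, Finset.mul_sum]
  refine Finset.sum_congr rfl fun i _ => Finset.sum_congr rfl fun j _ => by ring

lemma fip_eq_trace {m p : ℕ} (A B : Matrix (Fin m) (Fin p) ℝ) :
    fip A B = Matrix.trace (Aᵀ * B) := by
  simp only [Matrix.trace, Matrix.diag, Matrix.mul_apply, Matrix.transpose_apply, fip]
  rw [Finset.sum_comm]

lemma fip_mul_left {a b p : ℕ} (M : Matrix (Fin a) (Fin b) ℝ) (A : Matrix (Fin b) (Fin p) ℝ)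
    (B : Matrix (Fin a) (Fin p) ℝ) : fip (M * A) B = fip A (Mᵀ * B) := by
  rw [fip_eq_trace, fip_eq_trace, Matrix.transpose_mul, Matrix.mul_assoc]

lemma wSq_eq {a b p : ℕ} (U : Matrix (Fin a) (Fin b) ℝ) (A : Matrix (Fin b) (Fin p) ℝ) :
    wSq (Uᵀ * U) A = fip (U * A) (U * A) := by
  rw [wSq, fip_eq_trace, Matrix.transpose_mul, ← Matrix.mul_assoc Aᵀ Uᵀ U,
    Matrix.mul_assoc (Aᵀ * Uᵀ) U A]

end Fip

set_option maxHeartbeats 1000000 in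
/-- Monotonic successive difference of Mirror-EXTRA (Lemma 7). -/
theorem stmt_15 (n p : ℕ) (hn : 2 ≤ n) (hp : 1 ≤ p)
    (U : Matrix (Fin (n - 1)) (Fin n) ℝ)
    (hU : ∀ v : Fin n → ℝ, U.mulVec v = 0 ↔ ∃ a : ℝ, v = fun _ => a)
    (r : Matrix (Fin n) (Fin p) ℝ)
    (f : Fin n → (Fin p → ℝ) → ℝ)
    (g : Fin n → (Fin p → ℝ) → (Fin p → ℝ))
    -- each `fᵢ` is differentiable with gradient `g i`
    (hgrad : ∀ i (u : Fin p → ℝ),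
      HasGradientAt (fun v : EuclideanSpace ℝ (Fin p) => f i ((WithLp.equiv 2 (Fin p → ℝ)) v))
        ((WithLp.equiv 2 (Fin p → ℝ)).symm (g i u))
        ((WithLp.equiv 2 (Fin p → ℝ)).symm u))
    -- each `fᵢ` is convex
    (hconv : ∀ i, ConvexOn ℝ Set.univ (f i))
    (Li : Fin n → ℝ) (hLpos : ∀ i, 0 < Li i)
    -- each `∇fᵢ` is `Lᵢ`-Lipschitz
    (hlip : ∀ i (u v : Fin p → ℝ), enormSq (g i u - g i v) ≤ (Li i) ^ 2 * enormSq (u - v))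
    -- `L = maxᵢ Lᵢ`
    (L : ℝ) (hL : IsGreatest (Set.range Li) L)
    -- `λ_max(𝕃)`: the largest eigenvalue of `𝕃 = UᵀU`
    (lmax : ℝ)
    (hlmax_eig : ∃ v : Fin n → ℝ, v ≠ 0 ∧ (Uᵀ * U).mulVec v = lmax • v)
    (hlmax_max : ∀ (ν : ℝ) (v : Fin n → ℝ), v ≠ 0 → (Uᵀ * U).mulVec v = ν • v → ν ≤ lmax)
    (c : ℝ) (hc0 : 0 < c) (hc1 : c < 1 / (2 * L * lmax))
    -- a Mirror-EXTRA trajectory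
    (x : ℕ → Matrix (Fin n) (Fin p) ℝ) (q : ℕ → Matrix (Fin (n - 1)) (Fin p) ℝ)
    (hrec1 : ∀ k : ℕ,
      x (k + 1) - r + c • (Uᵀ * q (k + 1))
        - c • ((Uᵀ * U) * (gradMat g (x (k + 1)) - gradMat g (x k))) = 0)
    (hrec2 : ∀ k : ℕ, q (k + 1) = q k + U * gradMat g (x (k + 1))) :
    ∀ k : ℕ,
      c * frobSq (q (k + 1) - q (k + 2))
        + (2 / (L * lmax) - 3 * c) *
            wSq (Uᵀ * U) (gradMat g (x (k + 1)) - gradMat g (x (k + 2))) ≤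
      c * frobSq (q k - q (k + 1))
        + (2 / (L * lmax) - 3 * c) *
            wSq (Uᵀ * U) (gradMat g (x k) - gradMat g (x (k + 1))) := by
  have hL0 : 0 < L := by
    obtain ⟨i0, hi0⟩ := hL.1
    exact hi0 ▸ hLpos i0
  have hHerm : (Uᵀ * U).IsHermitian := isHermitian_conjTranspose_mul_self U
  have hray : ∀ v : Fin n → ℝ, ∑ i, (U.mulVec v i) ^ 2 ≤ lmax * ∑ i, (v i) ^ 2 := by
    intro v
    have h1 := rayleigh_bound (Uᵀ * U) hHerm lmax hlmax_max v
    have h2 : v ⬝ᵥ (Uᵀ * U).mulVec v = ∑ i, (U.mulVec v i) ^ 2 := by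
      rw [← Matrix.mulVec_mulVec, Matrix.dotProduct_mulVec, Matrix.vecMul_transpose]
      simp [dotProduct, sq]
    have h3 : v ⬝ᵥ v = ∑ i, (v i) ^ 2 := by simp [dotProduct, sq]
    rw [h2, h3] at h1
    exact h1
  have hlmax0 : 0 < lmax := by
    rcases lt_or_ge 0 lmax with h | h
    · exact h
    · exfalso
      set v : Fin n → ℝ := fun i => if i = (⟨0, by omega⟩ : Fin n) then (1 : ℝ) else 0 with hv
      have h1 := hray v
      have hsum : 0 ≤ ∑ i, (v i) ^ 2 := by positivity
      have h3 : ∑ i, (U.mulVec v i) ^ 2 ≤ 0 := by nlinarith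
      have h5 : ∑ i, (U.mulVec v i) ^ 2 = 0 := le_antisymm h3 (by positivity)
      have h4 : U.mulVec v = 0 := by
        funext i
        have h6 := (Finset.sum_eq_zero_iff_of_nonneg
          (fun i _ => sq_nonneg (U.mulVec v i))).1 h5 i (Finset.mem_univ i)
        exact pow_eq_zero_iff (two_ne_zero) |>.1 h6
      obtain ⟨a, ha⟩ := (hU v).1 h4
      have h8 : v ⟨0, by omega⟩ = a := by rw [ha]
      have h9 : v ⟨1, by omega⟩ = a := by rw [ha]
      rw [hv] at h8 h9
      simp [Fin.ext_iff] at h8 h9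
      rw [← h8] at h9
      norm_num at h9
  have hfrob_mul : ∀ (X : Matrix (Fin n) (Fin p) ℝ), frobSq (U * X) ≤ lmax * frobSq X := by
    intro X
    rw [frobSq, frobSq]
    rw [Finset.sum_comm]
    conv_rhs => rw [Finset.sum_comm]
    rw [Finset.mul_sum]
    refine Finset.sum_le_sum fun j _ => ?_
    have h := hray (fun k => X k j)
    have h1 : ∀ i, (U * X) i j = U.mulVec (fun k => X k j) i := by
      intro i
      simp [Matrix.mul_apply, Matrix.mulVec, dotProduct]
    calc ∑ i, ((U * X) i j) ^ 2 = ∑ i, (U.mulVec (fun k => X k j) i) ^ 2 := by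
          refine Finset.sum_congr rfl fun i _ => by rw [h1 i]
      _ ≤ lmax * ∑ k, (X k j) ^ 2 := h
  have hlipL : ∀ i (u v : Fin p → ℝ), enormSq (g i u - g i v) ≤ L ^ 2 * enormSq (u - v) := by
    intro i u v
    refine (hlip i u v).trans ?_
    have h1 : (Li i) ^ 2 ≤ L ^ 2 := pow_le_pow_left₀ (hLpos i).le (hL.2 ⟨i, rfl⟩) 2
    have h2 : 0 ≤ enormSq (u - v) := Finset.sum_nonneg fun j _ => sq_nonneg _
    exact mul_le_mul_of_nonneg_right h1 h2
  have hcoco : ∀ i (u v : Fin p → ℝ),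
      1 / L * enormSq (g i u - g i v) ≤ ∑ j, (g i u j - g i v j) * (u j - v j) :=
    fun i => row_coco (f i) (g i) (hgrad i) (hconv i) hL0 (hlipL i)
  intro k
  set A := gradMat g (x k) with hA
  set B := gradMat g (x (k + 1)) with hB
  set C := gradMat g (x (k + 2)) with hC
  have e1 : x (k + 1) - r + c • (Uᵀ * q (k + 1)) - c • ((Uᵀ * U) * (B - A)) = 0 := hrec1 k
  have e2 : x (k + 2) - r + c • (Uᵀ * q (k + 2)) - c • ((Uᵀ * U) * (C - B)) = 0 := hrec1 (k + 1)
  have hs : (q (k + 1) - q (k + 2)) - (q k - q (k + 1)) = U * (B - C) := by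
    have e3 : q (k + 1) = q k + U * B := hrec2 k
    have e4 : q (k + 2) = q (k + 1) + U * C := hrec2 (k + 1)
    rw [Matrix.mul_sub, e4, e3]
    abel
  have hd : x (k + 1) - x (k + 2) = (-c) • (Uᵀ * (q (k + 1) - q (k + 2)))
      + c • ((Uᵀ * U) * ((B - C) - (A - B))) := by
    have h3 : (Uᵀ * U) * ((B - C) - (A - B)) = (Uᵀ * U) * (B - A) - (Uᵀ * U) * (C - B) := by
      rw [← Matrix.mul_sub]
      congr 1
      abel
    rw [h3, Matrix.mul_sub Uᵀ]
    linear_combination (norm := module) e1 - e2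
  set M := U * (B - C) with hM
  set N := U * (A - B) with hN
  set s1 := q k - q (k + 1) with hs1
  set s2 := q (k + 1) - q (k + 2) with hs2
  have hsc : 1 / L * frobSq (B - C) ≤ fip (B - C) (x (k + 1) - x (k + 2)) := by
    rw [frobSq, fip, Finset.mul_sum]
    refine Finset.sum_le_sum fun i _ => ?_
    have h := hcoco i (x (k + 1) i) (x (k + 2) i)
    have hgoal : ∑ j, ((B - C) i j) ^ 2 = enormSq (g i (x (k + 1) i) - g i (x (k + 2) i)) := by
      simp [enormSq, hB, hC, gradMat, Matrix.sub_apply]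
    have hgoal2 : ∑ j, (B - C) i j * (x (k + 1) - x (k + 2)) i j
        = ∑ j, (g i (x (k + 1) i) j - g i (x (k + 2) i) j) * (x (k + 1) i j - x (k + 2) i j) := by
      refine Finset.sum_congr rfl fun j _ => ?_
      simp [hB, hC, gradMat, Matrix.sub_apply]
    rw [hgoal, hgoal2]
    exact h
  have hfA : frobSq M ≤ lmax * frobSq (B - C) := by
    rw [hM]; exact hfrob_mul (B - C)
  have r1 : 1 / (L * lmax) * fip M M ≤ fip (B - C) (x (k + 1) - x (k + 2)) := by
    have h1 : 1 / (L * lmax) * fip M M ≤ 1 / (L * lmax) * (lmax * frobSq (B - C)) := by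
      rw [← frobSq_eq]
      exact mul_le_mul_of_nonneg_left hfA (by positivity)
    have h2 : 1 / (L * lmax) * (lmax * frobSq (B - C)) = 1 / L * frobSq (B - C) := by
      field_simp
    linarith [hsc]
  have hfip_d : fip (B - C) (x (k + 1) - x (k + 2))
      = (-c) * fip M s2 + c * (fip M M - fip M N) := by
    have hUs : U * ((B - C) - (A - B)) = M - N := by rw [hM, hN, ← Matrix.mul_sub]
    rw [hd, fip_add_right, fip_smul_right, fip_smul_right]
    have h6 : fip (B - C) (Uᵀ * (U * ((B - C) - (A - B)))) = fip M M - fip M N := by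
      rw [← fip_mul_left, hUs, fip_sub_right, ← hM]
    have h7 : fip (B - C) (Uᵀ * s2) = fip M s2 := by rw [← fip_mul_left, ← hM]
    rw [Matrix.mul_assoc, h6, h7]
  have hexp : fip M s2 = (fip s2 s2 - fip s1 s1 + fip M M) / 2 := by
    rw [← hs]
    simp only [fip_sub_left, fip_sub_right]
    rw [fip_comm s1 s2]
    ring
  have h5 : -((fip M M + fip N N) / 2) ≤ fip M N := by
    have h0 := fip_self_nonneg (M + N)
    simp only [fip_add_left, fip_add_right] at h0
    rw [fip_comm N M] at h0
    linarith
  have h5c : c * (-((fip M M + fip N N) / 2)) ≤ c * fip M N :=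
    mul_le_mul_of_nonneg_left h5 hc0.le
  have hKEY : c * fip s2 s2 + 2 * (1 / (L * lmax)) * fip M M
      ≤ c * fip s1 s1 + 2 * c * fip M M + c * fip N N := by
    rw [hfip_d, hexp] at r1
    nlinarith [r1, h5c]
  have hco2 : 2 / (L * lmax) = 2 * (1 / (L * lmax)) := by ring
  have h4c : 4 * c < 2 * (1 / (L * lmax)) := by
    have h0 : (0 : ℝ) < L * lmax := mul_pos hL0 hlmax0
    have h1 : c < 1 / (2 * (L * lmax)) := by
      rw [show 2 * L * lmax = 2 * (L * lmax) by ring] at hc1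
      exact hc1
    have h2 : 4 * (1 / (2 * (L * lmax))) = 2 * (1 / (L * lmax)) := by
      field_simp
      ring
    linarith
  rw [wSq_eq U, wSq_eq U, frobSq_eq, frobSq_eq, ← hM, ← hN, hco2]
  have t1 : 0 ≤ (2 * (1 / (L * lmax)) - 4 * c) * fip N N :=
    mul_nonneg (by linarith) (fip_self_nonneg N)
  have t2 : 0 ≤ c * fip M M := mul_nonneg hc0.le (fip_self_nonneg M)
  nlinarith [hKEY, t1, t2]
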